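/- Let Q₄ₖ be the regular 4k-gon with unit side length, positioned with one side's midpoint at the origin, that side on the x-axis, and the polygon in the upper half-plane. Let S be the unit square con{(1/2,0),(1/2,1),(−1/2,1),(−1/2,0)}. Define the mangled (4k−4)-gon M_k as the convex hull of the points A_m (m ∈ {1,…,4k−1} \ {k,2k,3k}) where A_m = (Σ_{j=1}^m cos(jπ/(2k)) − Σ_{ℓ=1}^{⌊m/k⌋} cos(ℓπ/2), Σ_{j=1}^m sin(jπ/(2k)) − Σ_{ℓ=1}^{⌊m/k⌋} sin(ℓπ/2)). Then M_k + S = Q₄ₖ (Minkowski sum), for every integer k ≥ 2. -/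

import Mathlib

open Finset Pointwise

/-- The vertex `A_m` of the mangled `(4k-4)`-gon `M_k`. -/
noncomputable def mangledVertex (k m : ℕ) : ℝ × ℝ :=
  (∑ j ∈ Finset.Icc 1 m, Real.cos (j * (Real.pi / (2 * k))) -
      ∑ l ∈ Finset.Icc 1 (m / k), Real.cos (l * (Real.pi / 2)),
   ∑ j ∈ Finset.Icc 1 m, Real.sin (j * (Real.pi / (2 * k))) -
      ∑ l ∈ Finset.Icc 1 (m / k), Real.sin (l * (Real.pi / 2)))

/-- The vertex `C_m` of the regular `4k`-gon `Q₄ₖ` with unit side length, positioned with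
the midpoint of one side at the origin, that side on the x-axis, and the polygon in the
upper half-plane. -/
noncomputable def regularVertex (k m : ℕ) : ℝ × ℝ :=
  (1 / 2 + ∑ j ∈ Finset.Icc 1 m, Real.cos (j * (Real.pi / (2 * k))),
   ∑ j ∈ Finset.Icc 1 m, Real.sin (j * (Real.pi / (2 * k))))

noncomputable def th (k : ℕ) : ℝ := Real.pi / (2 * k)

noncomputable def ps (k m : ℕ) : ℝ := ((m : ℝ) + 1/2) * th k

noncomputable def QQ (k : ℕ) : Set (ℝ × ℝ) :=
  convexHull ℝ (regularVertex k '' {m : ℕ | m ≤ 4 * k - 1})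

noncomputable def tc (r : ℕ) : ℝ × ℝ :=
  if r = 0 then (1/2, 0) else if r = 1 then (1/2, 1) else if r = 2 then (-(1/2), 1)
  else (-(1/2), 0)

lemma kpos {k : ℕ} (hk : 1 ≤ k) : (0:ℝ) < k := by exact_mod_cast Nat.pos_of_ne_zero (by omega)

lemma th_pos {k : ℕ} (hk : 1 ≤ k) : 0 < th k := by
  unfold th
  have : (0:ℝ) < k := kpos hk
  positivity

lemma th_le {k : ℕ} (hk : 1 ≤ k) : th k ≤ Real.pi / 2 := by
  unfold th
  have h1 : (1:ℝ) ≤ k := by exact_mod_cast hk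
  rw [div_le_div_iff₀ (by linarith) (by norm_num)]
  nlinarith [Real.pi_pos]

lemma s_pos {k : ℕ} (hk : 1 ≤ k) : 0 < Real.sin (th k / 2) := by
  apply Real.sin_pos_of_pos_of_lt_pi
  · linarith [th_pos hk]
  · nlinarith [th_le hk, Real.pi_pos]

lemma pi_eq {k : ℕ} (hk : 1 ≤ k) : Real.pi = 2 * (k:ℝ) * th k := by
  have hkr : (k:ℝ) ≠ 0 := (kpos hk).ne'
  unfold th
  field_simp

lemma sum_cos (k : ℕ) (m : ℕ) :
    2 * Real.sin (th k / 2) * (1/2 + ∑ j ∈ Finset.Icc 1 m, Real.cos (j * (Real.pi / (2 * k)))) =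
      Real.sin (ps k m) := by
  induction m with
  | zero => simp [ps, th]; rw [mul_comm]; ring_nf
  | succ n ih =>
      rw [Finset.sum_Icc_succ_top (by omega),
        show ((n+1 : ℕ) : ℝ) * (Real.pi / (2*k)) = ((n:ℝ)+1) * th k by push_cast [th]; ring]
      have h1 : ps k (n+1) = (((n:ℝ)+1) * th k) + th k / 2 := by unfold ps th; push_cast; ring
      have h2 : ps k n = (((n:ℝ)+1) * th k) - th k / 2 := by unfold ps th; ring
      rw [h1]
      rw [h2] at ih
      rw [Real.sin_add, Real.sin_sub] at *
      nlinarith [ih]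

lemma sum_sin (k : ℕ) (m : ℕ) :
    2 * Real.sin (th k / 2) * (∑ j ∈ Finset.Icc 1 m, Real.sin (j * (Real.pi / (2 * k)))) =
      Real.cos (th k / 2) - Real.cos (ps k m) := by
  induction m with
  | zero => simp [ps, th]; rw [mul_comm]; ring_nf
  | succ n ih =>
      rw [Finset.sum_Icc_succ_top (by omega),
        show ((n+1 : ℕ) : ℝ) * (Real.pi / (2*k)) = ((n:ℝ)+1) * th k by push_cast [th]; ring]
      have h1 : ps k (n+1) = (((n:ℝ)+1) * th k) + th k / 2 := by unfold ps th; push_cast; ring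
      have h2 : ps k n = (((n:ℝ)+1) * th k) - th k / 2 := by unfold ps th; ring
      rw [h1]
      rw [h2] at ih
      rw [Real.cos_add, Real.cos_sub] at *
      nlinarith [ih]

lemma regular_eq (k : ℕ) (hk : 1 ≤ k) (m : ℕ) :
    regularVertex k m = (Real.sin (ps k m) / (2 * Real.sin (th k / 2)),
      (Real.cos (th k / 2) - Real.cos (ps k m)) / (2 * Real.sin (th k / 2))) := by
  have hs := s_pos hk
  unfold regularVertex
  rw [Prod.ext_iff]
  constructor
  · rw [eq_div_iff (by positivity)]
    rw [← sum_cos k m]; ring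
  · rw [eq_div_iff (by positivity)]
    rw [← sum_sin k m]; ring

lemma cast_sub_eq {a m : ℕ} (h : m + 1 ≤ a) : ((a - 1 - m : ℕ) : ℝ) = (a:ℝ) - 1 - m := by
  have h2 : (a - 1 - m) + m + 1 = a := by omega
  have := congrArg (Nat.cast : ℕ → ℝ) h2
  push_cast at this; linarith

lemma cast_pred {a : ℕ} (h : 1 ≤ a) : ((a - 1 : ℕ) : ℝ) = (a:ℝ) - 1 := by
  have := cast_sub_eq (a := a) (m := 0) (by omega); simpa using this

lemma psH {k m : ℕ} (hk : 1 ≤ k) (hm : m ≤ 4*k - 1) :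
    ps k (4*k - 1 - m) = 2 * Real.pi - ps k m := by
  have hc : ((4*k - 1 - m : ℕ) : ℝ) = 4*(k:ℝ) - 1 - m := by
    have := cast_sub_eq (a := 4*k) (m := m) (by omega); push_cast at this ⊢; linarith
  unfold ps th
  rw [hc]
  have hk0 : (k:ℝ) ≠ 0 := (kpos hk).ne'
  field_simp; ring

lemma psV1 {k m : ℕ} (hk : 1 ≤ k) (hm : m ≤ 2*k - 1) :
    ps k (2*k - 1 - m) = Real.pi - ps k m := by
  have hc : ((2*k - 1 - m : ℕ) : ℝ) = 2*(k:ℝ) - 1 - m := by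
    have := cast_sub_eq (a := 2*k) (m := m) (by omega); push_cast at this ⊢; linarith
  unfold ps th
  rw [hc]
  have hk0 : (k:ℝ) ≠ 0 := (kpos hk).ne'
  field_simp; ring

lemma psV2 {k m : ℕ} (hk : 1 ≤ k) (h2 : 2*k ≤ m) (hm : m ≤ 4*k - 1) :
    ps k (6*k - 1 - m) = 3 * Real.pi - ps k m := by
  have hc : ((6*k - 1 - m : ℕ) : ℝ) = 6*(k:ℝ) - 1 - m := by
    have := cast_sub_eq (a := 6*k) (m := m) (by omega); push_cast at this ⊢; linarith
  unfold ps th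
  rw [hc]
  have hk0 : (k:ℝ) ≠ 0 := (kpos hk).ne'
  field_simp; ring

lemma sin_ge {k : ℕ} (hk : 1 ≤ k) {x : ℝ} (h1 : th k / 2 ≤ x) (h2 : x ≤ Real.pi - th k / 2) :
    Real.sin (th k / 2) ≤ Real.sin x := by
  have hθ : 0 < th k := th_pos hk
  have hθ2 : th k ≤ Real.pi / 2 := th_le hk
  have key : ∀ y : ℝ, th k / 2 ≤ y → y ≤ Real.pi / 2 → Real.sin (th k / 2) ≤ Real.sin y := by
    intro y hy1 hy2
    exact Real.strictMonoOn_sin.monotoneOn ⟨by linarith, by linarith⟩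
      ⟨by linarith [Real.pi_pos], hy2⟩ hy1
  rcases le_total x (Real.pi / 2) with h | h
  · exact key x h1 h
  · have := key (Real.pi - x) (by linarith) (by linarith)
    rwa [Real.sin_pi_sub] at this

lemma ge1 {k m : ℕ} (hk : 1 ≤ k) (h : m + 1 ≤ k) :
    Real.sin (th k / 2) ≤ Real.cos (ps k m) := by
  rw [← Real.sin_pi_div_two_sub]
  have hθ := th_pos hk
  have hc : (m:ℝ) + 1 ≤ k := by exact_mod_cast h
  have hm0 : (0:ℝ) ≤ m := Nat.cast_nonneg m
  apply sin_ge hk <;> unfold ps <;> (try rw [pi_eq hk]) <;>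
    nlinarith [mul_le_mul_of_nonneg_right hc hθ.le, mul_nonneg hm0 hθ.le]

lemma ge2 {k m : ℕ} (hk : 1 ≤ k) (h3 : 3*k ≤ m) (h4 : m + 1 ≤ 4*k) :
    Real.sin (th k / 2) ≤ Real.cos (ps k m) := by
  have key : Real.sin (ps k m - 3 * Real.pi / 2) = Real.cos (ps k m) := by
    rw [Real.sin_sub, show (3:ℝ) * Real.pi / 2 = Real.pi + Real.pi/2 by ring,
      Real.sin_add, Real.cos_add]
    simp
  rw [← key]
  have hθ := th_pos hk
  have hc : 3*(k:ℝ) ≤ m := by exact_mod_cast h3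
  have hc2 : (m:ℝ) + 1 ≤ 4*k := by exact_mod_cast h4
  apply sin_ge hk <;> unfold ps <;> (try rw [pi_eq hk]) <;>
    nlinarith [mul_le_mul_of_nonneg_right hc hθ.le, mul_le_mul_of_nonneg_right hc2 hθ.le]

lemma ge3 {k m : ℕ} (hk : 1 ≤ k) (h1 : k ≤ m) (h2 : m + 1 ≤ 3*k) :
    Real.sin (th k / 2) ≤ -Real.cos (ps k m) := by
  have key : Real.sin (ps k m - Real.pi / 2) = -Real.cos (ps k m) := by
    rw [Real.sin_sub]; simp
  rw [← key]
  have hθ := th_pos hk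
  have hc : (k:ℝ) ≤ m := by exact_mod_cast h1
  have hc2 : (m:ℝ) + 1 ≤ 3*k := by exact_mod_cast h2
  apply sin_ge hk <;> unfold ps <;> (try rw [pi_eq hk]) <;>
    nlinarith [mul_le_mul_of_nonneg_right hc hθ.le, mul_le_mul_of_nonneg_right hc2 hθ.le]

lemma ge4 {k m : ℕ} (hk : 1 ≤ k) (h : m + 1 ≤ 2*k) :
    Real.sin (th k / 2) ≤ Real.sin (ps k m) := by
  have hθ := th_pos hk
  have hc : (m:ℝ) + 1 ≤ 2*k := by exact_mod_cast h
  have hm0 : (0:ℝ) ≤ m := Nat.cast_nonneg m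
  apply sin_ge hk <;> unfold ps <;> (try rw [pi_eq hk]) <;>
    nlinarith [mul_le_mul_of_nonneg_right hc hθ.le, mul_nonneg hm0 hθ.le]

lemma ge5 {k m : ℕ} (hk : 1 ≤ k) (h1 : 2*k ≤ m) (h2 : m + 1 ≤ 4*k) :
    Real.sin (th k / 2) ≤ -Real.sin (ps k m) := by
  have key : Real.sin (ps k m - Real.pi) = -Real.sin (ps k m) := by
    rw [Real.sin_sub]; simp
  rw [← key]
  have hθ := th_pos hk
  have hc : 2*(k:ℝ) ≤ m := by exact_mod_cast h1
  have hc2 : (m:ℝ) + 1 ≤ 4*k := by exact_mod_cast h2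
  apply sin_ge hk <;> unfold ps <;> (try rw [pi_eq hk]) <;>
    nlinarith [mul_le_mul_of_nonneg_right hc hθ.le, mul_le_mul_of_nonneg_right hc2 hθ.le]

lemma partnerH {k m : ℕ} (hk : 1 ≤ k) (hm : m ≤ 4*k - 1) :
    regularVertex k (4*k - 1 - m) =
      (-Real.sin (ps k m) / (2 * Real.sin (th k / 2)),
       (Real.cos (th k / 2) - Real.cos (ps k m)) / (2 * Real.sin (th k / 2))) := by
  rw [regular_eq k hk, psH hk hm, Real.sin_sub, Real.cos_sub]
  simp [Real.sin_two_pi, Real.cos_two_pi]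

lemma partnerV1 {k m : ℕ} (hk : 1 ≤ k) (hm : m ≤ 2*k - 1) :
    regularVertex k (2*k - 1 - m) =
      (Real.sin (ps k m) / (2 * Real.sin (th k / 2)),
       (Real.cos (th k / 2) + Real.cos (ps k m)) / (2 * Real.sin (th k / 2))) := by
  rw [regular_eq k hk, psV1 hk hm, Real.sin_pi_sub, Real.cos_pi_sub]
  ring_nf

lemma partnerV2 {k m : ℕ} (hk : 1 ≤ k) (h2 : 2*k ≤ m) (hm : m ≤ 4*k - 1) :
    regularVertex k (6*k - 1 - m) =
      (Real.sin (ps k m) / (2 * Real.sin (th k / 2)),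
       (Real.cos (th k / 2) + Real.cos (ps k m)) / (2 * Real.sin (th k / 2))) := by
  rw [regular_eq k hk, psV2 hk h2 hm, Real.sin_sub, Real.cos_sub,
    show (3:ℝ)*Real.pi = 2*Real.pi + Real.pi by ring, Real.sin_add, Real.cos_add]
  simp [Real.sin_two_pi, Real.cos_two_pi]

lemma mem_vertex {k m : ℕ} (hm : m ≤ 4*k - 1) : regularVertex k m ∈ QQ k :=
  subset_convexHull ℝ _ ⟨m, hm, rfl⟩

lemma mem_vertex' {k m : ℕ} (hm : m ≤ 4*k - 1) :
    regularVertex k m + ((0:ℝ), (0:ℝ)) ∈ QQ k := by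
  rw [show ((0:ℝ), (0:ℝ)) = (0 : ℝ × ℝ) from rfl, add_zero]
  exact mem_vertex hm

lemma seg_mem (k m m' : ℕ) (hm : m ≤ 4*k - 1) (hm' : m' ≤ 4*k - 1) (lam : ℝ)
    (h0 : 0 ≤ lam) (h1 : lam ≤ 1) {p : ℝ × ℝ}
    (hp : p = (1 - lam) • regularVertex k m + lam • regularVertex k m') : p ∈ QQ k := by
  rw [hp]
  exact convex_convexHull ℝ _ (mem_vertex hm) (mem_vertex hm') (by linarith) h0 (by ring)

lemma memH (k : ℕ) (hk : 1 ≤ k) (m : ℕ) (hm : m ≤ 4*k - 1) (c : ℝ) (hc : c = 1 ∨ c = -1)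
    (hge : Real.sin (th k / 2) ≤ -(c * Real.sin (ps k m))) :
    regularVertex k m + (c, 0) ∈ QQ k := by
  have hs := s_pos hk
  have hpos : 0 < -(c * Real.sin (ps k m)) := lt_of_lt_of_le hs hge
  apply seg_mem k m (4*k - 1 - m) hm (by omega)
    (Real.sin (th k / 2) / (-(c * Real.sin (ps k m)))) (by positivity)
    ((div_le_one hpos).mpr hge)
  rw [regular_eq k hk m, partnerH hk hm]
  have hne : Real.sin (ps k m) ≠ 0 := by
    intro h; rw [h, mul_zero, neg_zero] at hpos; exact lt_irrefl 0 hpos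
  rcases hc with rfl | rfl <;>
  · simp only [Prod.mk_add_mk, Prod.smul_mk, smul_eq_mul, Prod.mk.injEq]
    constructor
    · field_simp [hne, hs.ne']
      ring
    · field_simp [hne, hs.ne']
      ring

lemma memVD (k : ℕ) (hk : 1 ≤ k) (m m' : ℕ)
    (hpart : regularVertex k m' =
      (Real.sin (ps k m) / (2 * Real.sin (th k / 2)),
       (Real.cos (th k / 2) + Real.cos (ps k m)) / (2 * Real.sin (th k / 2))))
    (c d : ℝ) (hc : c = 1 ∨ c = -1)
    (hge : Real.sin (th k / 2) ≤ c * Real.cos (ps k m))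
    (hp : regularVertex k m + (d, 0) ∈ QQ k) (hq : regularVertex k m' + (d, 0) ∈ QQ k) :
    regularVertex k m + (d, c) ∈ QQ k := by
  have hs := s_pos hk
  have hpos : 0 < c * Real.cos (ps k m) := lt_of_lt_of_le hs hge
  set lam := Real.sin (th k / 2) / (c * Real.cos (ps k m)) with hlam
  have h0 : 0 ≤ lam := by positivity
  have h1 : lam ≤ 1 := (div_le_one hpos).mpr hge
  have key : regularVertex k m + (d, c) =
      (1 - lam) • (regularVertex k m + (d, 0)) + lam • (regularVertex k m' + (d, 0)) := by
    rw [regular_eq k hk m, hpart, hlam]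
    have hne : Real.cos (ps k m) ≠ 0 := by
      intro h
      rw [h, mul_zero] at hpos; exact lt_irrefl 0 hpos
    rcases hc with rfl | rfl <;>
    · simp only [Prod.mk_add_mk, Prod.smul_mk, smul_eq_mul, Prod.mk.injEq]
      constructor
      · field_simp [hne, hs.ne']
        ring
      · field_simp [hne, hs.ne']
        ring
  rw [key]
  exact convex_convexHull ℝ _ hp hq (by linarith) h0 (by ring)

lemma csum2 : ∑ l ∈ Finset.Icc 1 2, Real.cos ((l:ℕ) * (Real.pi / 2)) = -1 := by
  rw [show Finset.Icc 1 2 = {1, 2} by decide]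
  rw [Finset.sum_insert (by decide), Finset.sum_singleton]
  norm_num [show (2:ℝ) * (Real.pi/2) = Real.pi by ring, Real.cos_pi]

lemma ssum2 : ∑ l ∈ Finset.Icc 1 2, Real.sin ((l:ℕ) * (Real.pi / 2)) = 1 := by
  rw [show Finset.Icc 1 2 = {1, 2} by decide]
  rw [Finset.sum_insert (by decide), Finset.sum_singleton]
  norm_num [show (2:ℝ) * (Real.pi/2) = Real.pi by ring, Real.sin_pi]

lemma csum3 : ∑ l ∈ Finset.Icc 1 3, Real.cos ((l:ℕ) * (Real.pi / 2)) = -1 := by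
  rw [show Finset.Icc 1 3 = {1, 2, 3} by decide]
  rw [Finset.sum_insert (by decide), Finset.sum_insert (by decide), Finset.sum_singleton]
  norm_num [show (2:ℝ) * (Real.pi/2) = Real.pi by ring,
    show (3:ℝ) * (Real.pi/2) = Real.pi + Real.pi/2 by ring,
    Real.cos_pi, Real.cos_add, Real.sin_pi]

lemma ssum3 : ∑ l ∈ Finset.Icc 1 3, Real.sin ((l:ℕ) * (Real.pi / 2)) = 0 := by
  rw [show Finset.Icc 1 3 = {1, 2, 3} by decide]
  rw [Finset.sum_insert (by decide), Finset.sum_insert (by decide), Finset.sum_singleton]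
  norm_num [show (2:ℝ) * (Real.pi/2) = Real.pi by ring,
    show (3:ℝ) * (Real.pi/2) = Real.pi + Real.pi/2 by ring,
    Real.cos_pi, Real.sin_add, Real.sin_pi]

lemma mangled_add (k m : ℕ) (hr : m / k ≤ 3) :
    mangledVertex k m + tc (m / k) = regularVertex k m := by
  unfold mangledVertex regularVertex tc
  set r := m / k with hrdef
  clear_value r
  interval_cases r
  · simp [Prod.ext_iff] <;> ring
  · simp [Prod.ext_iff, Real.cos_pi_div_two, Real.sin_pi_div_two] <;> ring
  · simp [Prod.ext_iff, csum2, ssum2] <;> ring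
  · simp [Prod.ext_iff, csum3, ssum3] <;> ring

lemma div1 {k : ℕ} (hk : 1 ≤ k) : (k-1)/k = 0 := Nat.div_eq_of_lt (by omega)
lemma div2 {k : ℕ} (hk : 1 ≤ k) : (2*k-1)/k = 1 := by
  rw [show 2*k-1 = (k-1) + 1*k by omega, Nat.add_mul_div_right _ _ (show 0 < k by omega),
    Nat.div_eq_of_lt (by omega)]
lemma div3 {k : ℕ} (hk : 1 ≤ k) : (3*k-1)/k = 2 := by
  rw [show 3*k-1 = (k-1) + 2*k by omega, Nat.add_mul_div_right _ _ (show 0 < k by omega),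
    Nat.div_eq_of_lt (by omega)]
lemma div4 {k : ℕ} (hk : 1 ≤ k) : (4*k-1)/k = 3 := by
  rw [show 4*k-1 = (k-1) + 3*k by omega, Nat.add_mul_div_right _ _ (show 0 < k by omega),
    Nat.div_eq_of_lt (by omega)]

lemma F0 {k : ℕ} (hk : 1 ≤ k) :
    regularVertex k 0 = mangledVertex k (4*k-1) + ((1:ℝ)/2, (0:ℝ)) := by
  have hs := (s_pos hk).ne'
  have e1 : ps k (4*k-1) = 2*Real.pi - th k / 2 := by
    unfold ps; rw [cast_pred (show 1 ≤ 4*k by omega), pi_eq hk]; push_cast; ring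
  have h4 : regularVertex k (4*k-1) = (-(1/2), 0) := by
    rw [regular_eq k hk, e1, Real.sin_sub, Real.cos_sub]
    simp only [Real.sin_two_pi, Real.cos_two_pi, Prod.mk.injEq]
    constructor <;> (field_simp; try ring)
  have h0 : regularVertex k 0 = ((1:ℝ)/2, 0) := by
    simp [regularVertex]
  have hM := mangled_add k (4*k-1) (by rw [div4 hk])
  rw [div4 hk] at hM
  have htc : tc 3 = (-(1/2), 0) := by norm_num [tc]
  rw [htc, h4] at hM
  have hZ : mangledVertex k (4*k-1) = (0, 0) := by
    have := congrArg (· - ((-(1:ℝ)/2, (0:ℝ)))) hM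
    simp [Prod.ext_iff] at this ⊢
    constructor <;> linarith [this.1, this.2]
  rw [h0, hZ]
  norm_num [Prod.ext_iff]

lemma Fk {k : ℕ} (hk : 1 ≤ k) :
    regularVertex k k = mangledVertex k (k-1) + ((1:ℝ)/2, (1:ℝ)) := by
  have hs := (s_pos hk).ne'
  have e1 : ps k (k-1) = Real.pi/2 - th k / 2 := by
    unfold ps; rw [cast_pred hk, pi_eq hk]; ring
  have e2 : ps k k = Real.pi/2 + th k / 2 := by
    unfold ps; rw [pi_eq hk]; ring
  have step : regularVertex k k = regularVertex k (k-1) + ((0:ℝ), (1:ℝ)) := by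
    rw [regular_eq k hk, regular_eq k hk, e1, e2, Real.sin_add, Real.sin_sub,
      Real.cos_add, Real.cos_sub]
    simp only [Real.sin_pi_div_two, Real.cos_pi_div_two, Prod.mk_add_mk, Prod.mk.injEq]
    constructor <;> (field_simp; try ring)
  have hM := mangled_add k (k-1) (by rw [div1 hk]; omega)
  rw [div1 hk] at hM
  have htc : tc 0 = ((1:ℝ)/2, 0) := by norm_num [tc]
  rw [htc] at hM
  rw [step, ← hM]
  simp [Prod.ext_iff] <;> ring

lemma F2k {k : ℕ} (hk : 1 ≤ k) :
    regularVertex k (2*k) = mangledVertex k (2*k-1) + (-(1:ℝ)/2, (1:ℝ)) := by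
  have hs := (s_pos hk).ne'
  have e1 : ps k (2*k-1) = Real.pi - th k / 2 := by
    unfold ps; rw [cast_pred (show 1 ≤ 2*k by omega), pi_eq hk]; push_cast; ring
  have e2 : ps k (2*k) = Real.pi + th k / 2 := by
    unfold ps; rw [pi_eq hk]; push_cast; ring
  have step : regularVertex k (2*k) = regularVertex k (2*k-1) + (-(1:ℝ), (0:ℝ)) := by
    rw [regular_eq k hk, regular_eq k hk, e1, e2, Real.sin_add, Real.sin_sub,
      Real.cos_add, Real.cos_sub]
    simp only [Real.sin_pi, Real.cos_pi, Prod.mk_add_mk, Prod.mk.injEq]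
    constructor <;> (field_simp; try ring)
  have hM := mangled_add k (2*k-1) (by rw [div2 hk]; omega)
  rw [div2 hk] at hM
  have htc : tc 1 = ((1:ℝ)/2, 1) := by norm_num [tc]
  rw [htc] at hM
  rw [step, ← hM]
  simp [Prod.ext_iff] <;> ring

lemma F3k {k : ℕ} (hk : 1 ≤ k) :
    regularVertex k (3*k) = mangledVertex k (3*k-1) + (-(1:ℝ)/2, (0:ℝ)) := by
  have hs := (s_pos hk).ne'
  have e1 : ps k (3*k-1) = 3*Real.pi/2 - th k / 2 := by
    unfold ps; rw [cast_pred (show 1 ≤ 3*k by omega), pi_eq hk]; push_cast; ring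
  have e2 : ps k (3*k) = 3*Real.pi/2 + th k / 2 := by
    unfold ps; rw [pi_eq hk]; push_cast; ring
  have e3 : Real.sin (3*Real.pi/2) = -1 := by
    rw [show (3:ℝ)*Real.pi/2 = Real.pi + Real.pi/2 by ring, Real.sin_add]; simp
  have e4 : Real.cos (3*Real.pi/2) = 0 := by
    rw [show (3:ℝ)*Real.pi/2 = Real.pi + Real.pi/2 by ring, Real.cos_add]; simp
  have step : regularVertex k (3*k) = regularVertex k (3*k-1) + ((0:ℝ), -(1:ℝ)) := by
    rw [regular_eq k hk, regular_eq k hk, e1, e2, Real.sin_add, Real.sin_sub,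
      Real.cos_add, Real.cos_sub, e3, e4]
    simp only [Prod.mk_add_mk, Prod.mk.injEq]
    constructor <;> (field_simp; try ring)
  have hM := mangled_add k (3*k-1) (by rw [div3 hk]; omega)
  rw [div3 hk] at hM
  have htc : tc 2 = (-(1:ℝ)/2, 1) := by norm_num [tc]
  rw [htc] at hM
  rw [step, ← hM]
  simp [Prod.ext_iff] <;> ring

def corners : Set (ℝ × ℝ) :=
  {((1:ℝ)/2, (0:ℝ)), ((1:ℝ)/2, (1:ℝ)), (-(1:ℝ)/2, (1:ℝ)), (-(1:ℝ)/2, (0:ℝ))}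

lemma region0 (k : ℕ) (hk : 2 ≤ k) (m : ℕ) (h1 : 1 ≤ m) (h2 : m < k) {t : ℝ × ℝ}
    (ht : t ∈ corners) : mangledVertex k m + t ∈ QQ k := by
  have hk1 : 1 ≤ k := by omega
  have hm4 : m ≤ 4*k - 1 := by omega
  have hdiv : m / k = 0 := Nat.div_eq_of_lt h2
  have hM := mangled_add k m (by rw [hdiv]; omega)
  rw [hdiv, show tc 0 = ((1:ℝ)/2, (0:ℝ)) by norm_num [tc]] at hM
  have hv := mem_vertex' (k := k) (m := m) hm4
  have hv' := mem_vertex' (k := k) (m := 2*k-1-m) (by omega)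
  have hL : regularVertex k m + (-(1:ℝ), (0:ℝ)) ∈ QQ k :=
    memH k hk1 m hm4 (-1) (Or.inr rfl) (by simpa using ge4 hk1 (by omega))
  have hL' : regularVertex k (2*k-1-m) + (-(1:ℝ), (0:ℝ)) ∈ QQ k :=
    memH k hk1 (2*k-1-m) (by omega) (-1) (Or.inr rfl) (by simpa using ge4 hk1 (by omega))
  have hU : Real.sin (th k / 2) ≤ 1 * Real.cos (ps k m) := by
    simpa using ge1 hk1 (by omega)
  have hpart := partnerV1 (k := k) (m := m) hk1 (by omega)
  rcases ht with rfl | rfl | rfl | rfl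
  · rw [hM]; exact mem_vertex hm4
  · have key : mangledVertex k m + ((1:ℝ)/2, (1:ℝ)) = regularVertex k m + ((0:ℝ), (1:ℝ)) := by
      rw [← hM]; simp [Prod.ext_iff] <;> ring
    rw [key]
    exact memVD k hk1 m (2*k-1-m) hpart 1 0 (Or.inl rfl) hU hv hv'
  · have key : mangledVertex k m + (-(1:ℝ)/2, (1:ℝ)) = regularVertex k m + (-(1:ℝ), (1:ℝ)) := by
      rw [← hM]; simp [Prod.ext_iff] <;> ring
    rw [key]
    exact memVD k hk1 m (2*k-1-m) hpart 1 (-1) (Or.inl rfl) hU hL hL'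
  · have key : mangledVertex k m + (-(1:ℝ)/2, (0:ℝ)) = regularVertex k m + (-(1:ℝ), (0:ℝ)) := by
      rw [← hM]; simp [Prod.ext_iff] <;> ring
    rw [key]
    exact hL

lemma region1 (k : ℕ) (hk : 2 ≤ k) (m : ℕ) (h1 : k < m) (h2 : m < 2*k) {t : ℝ × ℝ}
    (ht : t ∈ corners) : mangledVertex k m + t ∈ QQ k := by
  have hk1 : 1 ≤ k := by omega
  have hm4 : m ≤ 4*k - 1 := by omega
  have hdiv : m / k = 1 := by
    rw [show m = (m - k) + 1*k by omega, Nat.add_mul_div_right _ _ (show 0 < k by omega),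
      Nat.div_eq_of_lt (by omega)]
  have hM := mangled_add k m (by rw [hdiv]; omega)
  rw [hdiv, show tc 1 = ((1:ℝ)/2, (1:ℝ)) by norm_num [tc]] at hM
  have hv := mem_vertex' (k := k) (m := m) hm4
  have hv' := mem_vertex' (k := k) (m := 2*k-1-m) (by omega)
  have hL : regularVertex k m + (-(1:ℝ), (0:ℝ)) ∈ QQ k :=
    memH k hk1 m hm4 (-1) (Or.inr rfl) (by simpa using ge4 hk1 (by omega))
  have hL' : regularVertex k (2*k-1-m) + (-(1:ℝ), (0:ℝ)) ∈ QQ k :=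
    memH k hk1 (2*k-1-m) (by omega) (-1) (Or.inr rfl) (by simpa using ge4 hk1 (by omega))
  have hD : Real.sin (th k / 2) ≤ (-1) * Real.cos (ps k m) := by
    simpa using ge3 hk1 (by omega) (by omega)
  have hpart := partnerV1 (k := k) (m := m) hk1 (by omega)
  rcases ht with rfl | rfl | rfl | rfl
  · have key : mangledVertex k m + ((1:ℝ)/2, (0:ℝ)) = regularVertex k m + ((0:ℝ), (-1:ℝ)) := by
      rw [← hM]; simp [Prod.ext_iff] <;> ring
    rw [key]
    exact memVD k hk1 m (2*k-1-m) hpart (-1) 0 (Or.inr rfl) hD hv hv'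
  · rw [hM]; exact mem_vertex hm4
  · have key : mangledVertex k m + (-(1:ℝ)/2, (1:ℝ)) = regularVertex k m + (-(1:ℝ), (0:ℝ)) := by
      rw [← hM]; simp [Prod.ext_iff] <;> ring
    rw [key]
    exact hL
  · have key : mangledVertex k m + (-(1:ℝ)/2, (0:ℝ)) = regularVertex k m + (-(1:ℝ), (-1:ℝ)) := by
      rw [← hM]; simp [Prod.ext_iff] <;> ring
    rw [key]
    exact memVD k hk1 m (2*k-1-m) hpart (-1) (-1) (Or.inr rfl) hD hL hL'

lemma region2 (k : ℕ) (hk : 2 ≤ k) (m : ℕ) (h1 : 2*k < m) (h2 : m < 3*k) {t : ℝ × ℝ}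
    (ht : t ∈ corners) : mangledVertex k m + t ∈ QQ k := by
  have hk1 : 1 ≤ k := by omega
  have hm4 : m ≤ 4*k - 1 := by omega
  have hdiv : m / k = 2 := by
    rw [show m = (m - 2*k) + 2*k by omega, Nat.add_mul_div_right _ _ (show 0 < k by omega),
      Nat.div_eq_of_lt (by omega)]
  have hM := mangled_add k m (by rw [hdiv]; omega)
  rw [hdiv, show tc 2 = (-(1:ℝ)/2, (1:ℝ)) by norm_num [tc]] at hM
  have hv := mem_vertex' (k := k) (m := m) hm4
  have hv' := mem_vertex' (k := k) (m := 6*k-1-m) (by omega)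
  have hR : regularVertex k m + ((1:ℝ), (0:ℝ)) ∈ QQ k :=
    memH k hk1 m hm4 1 (Or.inl rfl) (by simpa using ge5 hk1 (by omega) (by omega))
  have hR' : regularVertex k (6*k-1-m) + ((1:ℝ), (0:ℝ)) ∈ QQ k :=
    memH k hk1 (6*k-1-m) (by omega) 1 (Or.inl rfl)
      (by simpa using ge5 hk1 (by omega) (by omega))
  have hD : Real.sin (th k / 2) ≤ (-1) * Real.cos (ps k m) := by
    simpa using ge3 hk1 (by omega) (by omega)
  have hpart := partnerV2 (k := k) (m := m) hk1 (by omega) (by omega)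
  rcases ht with rfl | rfl | rfl | rfl
  · have key : mangledVertex k m + ((1:ℝ)/2, (0:ℝ)) = regularVertex k m + ((1:ℝ), (-1:ℝ)) := by
      rw [← hM]; simp [Prod.ext_iff] <;> ring
    rw [key]
    exact memVD k hk1 m (6*k-1-m) hpart (-1) 1 (Or.inr rfl) hD hR hR'
  · have key : mangledVertex k m + ((1:ℝ)/2, (1:ℝ)) = regularVertex k m + ((1:ℝ), (0:ℝ)) := by
      rw [← hM]; simp [Prod.ext_iff] <;> ring
    rw [key]
    exact hR
  · rw [hM]; exact mem_vertex hm4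
  · have key : mangledVertex k m + (-(1:ℝ)/2, (0:ℝ)) = regularVertex k m + ((0:ℝ), (-1:ℝ)) := by
      rw [← hM]; simp [Prod.ext_iff] <;> ring
    rw [key]
    exact memVD k hk1 m (6*k-1-m) hpart (-1) 0 (Or.inr rfl) hD hv hv'

lemma region3 (k : ℕ) (hk : 2 ≤ k) (m : ℕ) (h1 : 3*k < m) (h2 : m ≤ 4*k - 1) {t : ℝ × ℝ}
    (ht : t ∈ corners) : mangledVertex k m + t ∈ QQ k := by
  have hk1 : 1 ≤ k := by omega
  have hdiv : m / k = 3 := by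
    rw [show m = (m - 3*k) + 3*k by omega, Nat.add_mul_div_right _ _ (show 0 < k by omega),
      Nat.div_eq_of_lt (by omega)]
  have hM := mangled_add k m (by rw [hdiv])
  rw [hdiv, show tc 3 = (-(1:ℝ)/2, (0:ℝ)) by norm_num [tc]] at hM
  have hv := mem_vertex' (k := k) (m := m) h2
  have hv' := mem_vertex' (k := k) (m := 6*k-1-m) (by omega)
  have hR : regularVertex k m + ((1:ℝ), (0:ℝ)) ∈ QQ k :=
    memH k hk1 m h2 1 (Or.inl rfl) (by simpa using ge5 hk1 (by omega) (by omega))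
  have hR' : regularVertex k (6*k-1-m) + ((1:ℝ), (0:ℝ)) ∈ QQ k :=
    memH k hk1 (6*k-1-m) (by omega) 1 (Or.inl rfl)
      (by simpa using ge5 hk1 (by omega) (by omega))
  have hU : Real.sin (th k / 2) ≤ 1 * Real.cos (ps k m) := by
    simpa using ge2 hk1 (by omega) (by omega)
  have hpart := partnerV2 (k := k) (m := m) hk1 (by omega) (by omega)
  rcases ht with rfl | rfl | rfl | rfl
  · have key : mangledVertex k m + ((1:ℝ)/2, (0:ℝ)) = regularVertex k m + ((1:ℝ), (0:ℝ)) := by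
      rw [← hM]; simp [Prod.ext_iff] <;> ring
    rw [key]
    exact hR
  · have key : mangledVertex k m + ((1:ℝ)/2, (1:ℝ)) = regularVertex k m + ((1:ℝ), (1:ℝ)) := by
      rw [← hM]; simp [Prod.ext_iff] <;> ring
    rw [key]
    exact memVD k hk1 m (6*k-1-m) hpart 1 1 (Or.inl rfl) hU hR hR'
  · have key : mangledVertex k m + (-(1:ℝ)/2, (1:ℝ)) = regularVertex k m + ((0:ℝ), (1:ℝ)) := by
      rw [← hM]; simp [Prod.ext_iff] <;> ring
    rw [key]
    exact memVD k hk1 m (6*k-1-m) hpart 1 0 (Or.inl rfl) hU hv hv'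
  · rw [hM]; exact mem_vertex h2

/-- The Minkowski sum of the mangled `(4k-4)`-gon `M_k` and the unit square `S` is the
regular `4k`-gon `Q₄ₖ` with unit sides, for every integer `k ≥ 2`. -/
theorem mangled_plus_square_eq_regular (k : ℕ) (hk : 2 ≤ k) :
    (convexHull ℝ (mangledVertex k ''
        {m : ℕ | 1 ≤ m ∧ m ≤ 4 * k - 1 ∧ m ≠ k ∧ m ≠ 2 * k ∧ m ≠ 3 * k})) +
      (convexHull ℝ {((1:ℝ)/2, (0:ℝ)), ((1:ℝ)/2, (1:ℝ)),
        (-(1:ℝ)/2, (1:ℝ)), (-(1:ℝ)/2, (0:ℝ))}) =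
    convexHull ℝ (regularVertex k '' {m : ℕ | m ≤ 4 * k - 1}) := by
  have hk1 : 1 ≤ k := by omega
  rw [← convexHull_add]
  apply Set.Subset.antisymm
  · apply convexHull_min ?_ (convex_convexHull ℝ _)
    rintro x hx
    obtain ⟨a, ha, t, ht, rfl⟩ := Set.mem_add.1 hx
    obtain ⟨m, hm, rfl⟩ := ha
    simp only [Set.mem_setOf_eq] at hm
    obtain ⟨h1, h2, h3, h4, h5⟩ := hm
    have ht' : t ∈ corners := ht
    rcases lt_or_ge m k with hlt | hge
    · exact region0 k hk m h1 hlt ht'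
    · rcases lt_or_ge m (2*k) with hlt2 | hge2
      · exact region1 k hk m (by omega) hlt2 ht'
      · rcases lt_or_ge m (3*k) with hlt3 | hge3
        · exact region2 k hk m (by omega) hlt3 ht'
        · exact region3 k hk m (by omega) (by omega) ht'
  · apply convexHull_mono
    rintro x ⟨m, hm, rfl⟩
    simp only [Set.mem_setOf_eq] at hm
    by_cases h0 : m = 0
    · subst h0
      rw [F0 hk1]
      exact Set.add_mem_add ⟨4*k-1, ⟨by omega, by omega, by omega, by omega, by omega⟩, rfl⟩
        (by simp)
    by_cases hmk : m = k
    · rw [hmk, Fk hk1]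
      exact Set.add_mem_add ⟨k-1, ⟨by omega, by omega, by omega, by omega, by omega⟩, rfl⟩
        (by simp)
    by_cases hm2k : m = 2*k
    · rw [hm2k, F2k hk1]
      exact Set.add_mem_add ⟨2*k-1, ⟨by omega, by omega, by omega, by omega, by omega⟩, rfl⟩
        (by simp)
    by_cases hm3k : m = 3*k
    · rw [hm3k, F3k hk1]
      exact Set.add_mem_add ⟨3*k-1, ⟨by omega, by omega, by omega, by omega, by omega⟩, rfl⟩
        (by simp)
    · have hr : m / k ≤ 3 := by
        have := (Nat.div_lt_iff_lt_mul (show 0 < k by omega)).mpr (show m < 4*k by omega)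
        omega
      rw [← mangled_add k m hr]
      refine Set.add_mem_add ⟨m, ⟨by omega, by omega, by omega, by omega, by omega⟩, rfl⟩ ?_
      have hr0 : 0 ≤ m / k := Nat.zero_le _
      set r := m / k with hrr
      clear_value r
      interval_cases r <;> norm_num [tc] <;> simp
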